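/- Let A be a multipermutation skew brace (i.e., Soc_n(A) = A for some n) and suppose X ⊆ A generates A as a strong left ideal. Then X generates A as a skew brace (i.e., the smallest subskew brace of A containing X is A). -/
import Mathlib

/-- A skew (left) brace structure on an additive group `(A,+)`: a second group
operation `mul` (with inverse `inv`) sharing the identity `0`, satisfying
`a ∘ (b + c) = a ∘ b - a + a ∘ c`. -/
structure SkewBrace (A : Type*) [AddGroup A] where
  mul : A → A → A
  inv : A → A
  mul_assoc : ∀ a b c, mul (mul a b) c = mul a (mul b c)
  zero_mul : ∀ a, mul 0 a = a
  mul_zero : ∀ a, mul a 0 = a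
  inv_mul : ∀ a, mul (inv a) a = 0
  left_compat : ∀ a b c, mul a (b + c) = mul a b + -a + mul a c

/-- A strong left ideal: a normal subgroup of `(A,+)` stable under every `λ_a`. -/
def IsStrongLeftIdeal {A : Type*} [AddGroup A] (S : SkewBrace A)
    (I : AddSubgroup A) : Prop :=
  I.Normal ∧ ∀ a : A, ∀ x ∈ I, -a + S.mul a x ∈ I

/-- The socle series of a skew brace, described by coset conditions:
`Soc 0 = {0}` and `x ∈ Soc (n+1)` iff for all `a`, `x∘a ≡ x+a ≡ a+x` modulo
`Soc n`. -/
def socSet {A : Type*} [AddGroup A] (S : SkewBrace A) : ℕ → Set A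
  | 0 => {0}
  | n + 1 => {x | ∀ a : A,
      S.mul x a - (x + a) ∈ socSet S n ∧ (x + a) - (a + x) ∈ socSet S n}

set_option linter.unusedSectionVars false
set_option linter.unusedVariables false

namespace SkewBrace

variable {A : Type*} [AddGroup A] (S : SkewBrace A)

theorem inv_inv (a : A) : S.inv (S.inv a) = a := by
  have h1 : S.mul (S.inv (S.inv a)) (S.mul (S.inv a) a) = a := by
    rw [← S.mul_assoc, S.inv_mul, S.zero_mul]
  rw [S.inv_mul, S.mul_zero] at h1
  exact h1

theorem mul_inv (a : A) : S.mul a (S.inv a) = 0 := by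
  have h := S.inv_mul (S.inv a)
  rwa [S.inv_inv] at h

/-- the lambda map -/
def lam (a x : A) : A := -a + S.mul a x

theorem mul_eq (a x : A) : S.mul a x = a + S.lam a x := by
  simp [lam]

theorem lam_add (a b c : A) : S.lam a (b + c) = S.lam a b + S.lam a c := by
  simp [lam, S.left_compat, add_assoc]

theorem lam_zero (a : A) : S.lam a 0 = 0 := by simp [lam, S.mul_zero]

theorem lam_neg (a b : A) : S.lam a (-b) = -(S.lam a b) := by
  have h : S.lam a b + S.lam a (-b) = 0 := by
    rw [← S.lam_add, add_neg_cancel, S.lam_zero]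
  exact eq_neg_of_add_eq_zero_right h

theorem mul_neg (a b : A) : S.mul a (-b) = a + -(S.mul a b) + a := by
  rw [S.mul_eq a (-b), S.lam_neg, lam]
  simp [add_assoc]

theorem lam_mul (a b c : A) : S.lam (S.mul a b) c = S.lam a (S.lam b c) := by
  simp only [lam, S.left_compat, S.mul_neg, S.mul_assoc]
  simp [add_assoc]

theorem lam_zero_elem (c : A) : S.lam 0 c = c := by simp [lam, S.zero_mul]

theorem lam_lam_inv (a c : A) : S.lam a (S.lam (S.inv a) c) = c := by
  rw [← S.lam_mul, S.mul_inv, S.lam_zero_elem]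

theorem lam_inv_lam (a c : A) : S.lam (S.inv a) (S.lam a c) = c := by
  rw [← S.lam_mul, S.inv_mul, S.lam_zero_elem]

theorem add_eq_mul (a b : A) : a + b = S.mul a (S.lam (S.inv a) b) := by
  rw [S.mul_eq, S.lam_lam_inv]

theorem lam_inv_self (a : A) : S.lam a (S.inv a) = -a := by
  simp [lam, S.mul_inv]

end SkewBrace

namespace SkewBrace

variable {A : Type*} [AddGroup A] (S : SkewBrace A)

/-- A bundle of closure properties making a set behave like a "socle-type ideal". -/
structure Nice (N : Set A) : Prop where
  zero_mem : (0 : A) ∈ N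
  add_mem : ∀ {u v : A}, u ∈ N → v ∈ N → u + v ∈ N
  neg_mem : ∀ {u : A}, u ∈ N → -u ∈ N
  conj_mem : ∀ (a : A) {u : A}, u ∈ N → a + u + -a ∈ N
  lam_mem : ∀ (a : A) {u : A}, u ∈ N → S.lam a u ∈ N
  inv_mem : ∀ {u : A}, u ∈ N → S.inv u ∈ N
  mul_mem : ∀ {u v : A}, u ∈ N → v ∈ N → S.mul u v ∈ N
  lam_id : ∀ {u : A}, u ∈ N → ∀ c, S.lam u c - c ∈ N
  comm : ∀ {u : A}, u ∈ N → ∀ c, (u + c) - (c + u) ∈ N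
  lac : ∀ {u v : A}, u - v ∈ N → ∀ c, S.mul u c - S.mul v c ∈ N

/-- congruence modulo a set -/
def cong (N : Set A) (u v : A) : Prop := u - v ∈ N

namespace Nice

variable {S} {N : Set A} (hN : Nice S N)
include hN

theorem cong_refl (u : A) : cong N u u := by
  simpa [cong] using hN.zero_mem

theorem mem_iff_cong_zero {u : A} : u ∈ N ↔ cong N u 0 := by simp [cong]

theorem cong_symm {u v : A} (h : cong N u v) : cong N v u := by
  have := hN.neg_mem h
  simpa [cong, neg_sub] using this

theorem cong_trans {u v w : A} (h1 : cong N u v) (h2 : cong N v w) : cong N u w := by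
  have := hN.add_mem h1 h2
  simpa [cong, sub_add_sub_cancel] using this

theorem cong_add_right {u v : A} (c : A) (h : cong N u v) : cong N (u + c) (v + c) := by
  simpa [cong, sub_eq_add_neg, neg_add_rev, add_assoc] using h

theorem cong_add_left {u v : A} (c : A) (h : cong N u v) : cong N (c + u) (c + v) := by
  have := hN.conj_mem c h
  simp only [cong, sub_eq_add_neg, neg_add_rev] at this ⊢
  simpa [add_assoc] using this

theorem cong_add {u v u' v' : A} (h : cong N u v) (h' : cong N u' v') :
    cong N (u + u') (v + v') :=
  hN.cong_trans (hN.cong_add_left u h') (hN.cong_add_right v' h)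

theorem cong_neg {u v : A} (h : cong N u v) : cong N (-u) (-v) := by
  have h2 : -v + (u - v) + -(-v) ∈ N := hN.conj_mem (-v) h
  have h3 : -u + v ∈ N := by
    have := hN.neg_mem h2
    simpa [sub_eq_add_neg, neg_add_rev, add_assoc] using this
  simpa [cong, sub_eq_add_neg] using h3

theorem cong_of_add_left {u v c : A} (h : cong N (c + u) (c + v)) : cong N u v := by
  have := hN.cong_add_left (-c) h
  simpa using this

theorem cong_lam {u v : A} (a : A) (h : cong N u v) : cong N (S.lam a u) (S.lam a v) := by
  have := hN.lam_mem a h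
  simpa [cong, sub_eq_add_neg, S.lam_add, S.lam_neg] using this

theorem cong_mul_right {u v : A} (a : A) (h : cong N u v) :
    cong N (S.mul a u) (S.mul a v) := by
  rw [S.mul_eq a u, S.mul_eq a v]
  exact hN.cong_add_left a (hN.cong_lam a h)

theorem cong_mul_left {u v : A} (c : A) (h : cong N u v) :
    cong N (S.mul u c) (S.mul v c) := hN.lac h c

theorem cong_lam_id {u : A} (hu : u ∈ N) (c : A) : cong N (S.lam u c) c := hN.lam_id hu c

theorem cong_comm_mem {u : A} (hu : u ∈ N) (c : A) : cong N (u + c) (c + u) := hN.comm hu c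

end Nice

/-- centrality modulo N -/
def CentralMod (N : Set A) (x : A) : Prop := ∀ c : A, cong N (x + c) (c + x)

namespace Nice

variable {S} {N : Set A} (hN : Nice S N)
include hN

theorem central_cong {u v : A} (h : cong N u v) (hv : CentralMod N v) : CentralMod N u := by
  intro c
  exact hN.cong_trans (hN.cong_add_right c h)
    (hN.cong_trans (hv c) (hN.cong_add_left c (hN.cong_symm h)))

theorem central_zero : CentralMod N (0 : A) := by
  intro c; simpa using hN.cong_refl c

theorem central_add {x y : A} (hx : CentralMod N x) (hy : CentralMod N y) :
    CentralMod N (x + y) := by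
  intro c
  have h1 : cong N (x + (y + c)) (x + (c + y)) := hN.cong_add_left x (hy c)
  have h2 : cong N ((x + c) + y) ((c + x) + y) := hN.cong_add_right y (hx c)
  have h1' : cong N (x + y + c) (x + c + y) := by simpa [add_assoc] using h1
  have h2' : cong N (x + c + y) (c + (x + y)) := by simpa [add_assoc] using h2
  exact hN.cong_trans h1' h2'

theorem central_neg {x : A} (hx : CentralMod N x) : CentralMod N (-x) := by
  intro c
  exact hN.cong_symm (by simpa [neg_add_rev] using hN.cong_neg (hx (-c)))

end Nice

end SkewBrace

namespace SkewBrace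

variable {A : Type*} [AddGroup A] (S : SkewBrace A)

theorem socSet_mono : ∀ k, socSet S k ⊆ socSet S (k+1) := by
  intro k
  induction k with
  | zero =>
    intro x hx
    have hx0 : x = 0 := hx
    subst hx0
    intro a
    constructor
    · simp [socSet, S.zero_mul]
    · simp [socSet]
  | succ k ih =>
    intro x hx a
    exact ⟨ih (hx a).1, ih (hx a).2⟩

theorem mem_succ_iff {k : ℕ} (hN : Nice S (socSet S k)) {x : A} :
    x ∈ socSet S (k+1) ↔
      ((∀ a, cong (socSet S k) (S.lam x a) a) ∧ CentralMod (socSet S k) x) := by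
  constructor
  · intro h
    refine ⟨fun a => ?_, fun a => (h a).2⟩
    have h1 := (h a).1
    rw [S.mul_eq] at h1
    exact hN.cong_of_add_left h1
  · rintro ⟨hl, hc⟩ a
    refine ⟨?_, hc a⟩
    show S.mul x a - (x + a) ∈ socSet S k
    rw [S.mul_eq]
    exact hN.cong_add_left x (hl a)

theorem nice_succ {k : ℕ} (hN : Nice S (socSet S k)) :
    Nice S (socSet S (k+1)) := by
  have hmono : socSet S k ⊆ socSet S (k+1) := socSet_mono S k
  have mem : ∀ {x : A}, x ∈ socSet S (k+1) ↔
      ((∀ a, cong (socSet S k) (S.lam x a) a) ∧ CentralMod (socSet S k) x) :=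
    fun {x} => mem_succ_iff S hN
  set N := socSet S k with hNdef
  set M := socSet S (k+1) with hMdef
  have repl : ∀ {u t : A}, cong N u t → t ∈ M → u ∈ M := by
    intro u t hut ht
    obtain ⟨hl, hc⟩ := mem.1 ht
    refine mem.2 ⟨fun c => ?_, hN.central_cong hut hc⟩
    have h1 : cong N (S.mul u c) (S.mul t c) := hN.lac hut c
    have h2 : cong N (S.lam u c) (S.lam t c) := by
      simp only [SkewBrace.lam]
      exact hN.cong_add (hN.cong_neg hut) h1
    exact hN.cong_trans h2 (hl c)
  have zmem : (0:A) ∈ M := by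
    refine mem.2 ⟨fun a => ?_, fun c => ?_⟩
    · rw [S.lam_zero_elem]; exact hN.cong_refl a
    · simpa using hN.cong_refl c
  have negmem : ∀ {x : A}, x ∈ M → -x ∈ M := by
    intro x hx
    obtain ⟨hl, hc⟩ := mem.1 hx
    refine mem.2 ⟨fun c => ?_, hN.central_neg hc⟩
    have hm : cong N (S.mul x (-x)) 0 := by
      have h2 : cong N (x + S.lam x (-x)) (x + -x) := by
        rw [S.lam_neg]
        exact hN.cong_add_left x (hN.cong_neg (hl x))
      rw [S.mul_eq]
      simpa using h2
    have h4 : cong N (S.mul (S.mul x (-x)) c) (S.mul 0 c) := hN.lac hm c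
    rw [S.mul_assoc, S.zero_mul] at h4
    have h5 : cong N (S.mul x (S.mul (-x) c)) (x + S.mul (-x) c) := by
      rw [S.mul_eq x (S.mul (-x) c)]
      exact hN.cong_add_left x (hl _)
    have h6 : cong N (x + S.mul (-x) c) c := hN.cong_trans (hN.cong_symm h5) h4
    have e : S.lam (-x) c = x + S.mul (-x) c := by rw [SkewBrace.lam, neg_neg]
    rw [e]; exact h6
  have invmem : ∀ {x : A}, x ∈ M → S.inv x ∈ M := by
    intro x hx
    obtain ⟨hl, _⟩ := mem.1 hx
    have h2 : cong N (-x) (S.inv x) := by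
      have h := hl (S.inv x)
      rwa [S.lam_inv_self] at h
    exact repl (hN.cong_symm h2) (negmem hx)
  have mulmem : ∀ {x y : A}, x ∈ M → y ∈ M → S.mul x y ∈ M := by
    intro x y hx hy
    obtain ⟨hlx, hcx⟩ := mem.1 hx
    obtain ⟨hly, hcy⟩ := mem.1 hy
    refine mem.2 ⟨fun c => ?_, ?_⟩
    · rw [S.lam_mul]
      exact hN.cong_trans (hN.cong_lam x (hly c)) (hlx c)
    · have h1 : cong N (S.mul x y) (x + y) := by
        rw [S.mul_eq]; exact hN.cong_add_left x (hlx y)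
      exact hN.central_cong h1 (hN.central_add hcx hcy)
  have addmem : ∀ {x y : A}, x ∈ M → y ∈ M → x + y ∈ M := by
    intro x y hx hy
    obtain ⟨hlx', _⟩ := mem.1 (invmem hx)
    have h2 : cong N (S.mul x (S.lam (S.inv x) y)) (S.mul x y) :=
      hN.cong_mul_right x (hlx' y)
    rw [← S.add_eq_mul] at h2
    exact repl h2 (mulmem hx hy)
  have conjmem : ∀ (a : A) {x : A}, x ∈ M → a + x + -a ∈ M := by
    intro a x hx
    obtain ⟨_, hcx⟩ := mem.1 hx
    have h2 : cong N (a + x + -a) (x + a + -a) := hN.cong_add_right _ (hN.cong_symm (hcx a))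
    rw [add_neg_cancel_right] at h2
    exact repl h2 hx
  have lammem : ∀ (b : A) {x : A}, x ∈ M → S.lam b x ∈ M := by
    intro b x hx
    obtain ⟨hlx, hcx⟩ := mem.1 hx
    have hcz : CentralMod N (S.lam b x) := by
      intro c
      have key : (S.lam b x + c) - (c + S.lam b x)
          = S.lam b ((x + S.lam (S.inv b) c) - (S.lam (S.inv b) c + x)) := by
        rw [sub_eq_add_neg, sub_eq_add_neg, neg_add_rev, neg_add_rev,
          S.lam_add, S.lam_add, S.lam_add, S.lam_neg, S.lam_neg, S.lam_lam_inv]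
      show (S.lam b x + c) - (c + S.lam b x) ∈ N
      rw [key]
      exact hN.lam_mem b (hcx (S.lam (S.inv b) c))
    have hlz : ∀ c, cong N (S.lam (S.lam b x) c) c := by
      intro c
      have hlw : cong N (S.lam (S.mul b (S.mul x (S.inv b))) c) c := by
        rw [S.lam_mul, S.lam_mul]
        have h2 := hN.cong_lam b (hlx (S.lam (S.inv b) c))
        rwa [S.lam_lam_inv] at h2
      have hwz : cong N (S.mul b (S.mul x (S.inv b))) (S.lam b x) := by
        have e2 : S.mul b (S.mul x (S.inv b)) = b + S.lam b x + S.lam b (S.lam x (S.inv b)) := by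
          rw [S.mul_eq b, S.mul_eq x, S.lam_add, add_assoc]
        have h3 : cong N (S.lam b (S.lam x (S.inv b))) (-b) := by
          have := hN.cong_lam b (hlx (S.inv b))
          rwa [S.lam_inv_self] at this
        have h4 : cong N (S.mul b (S.mul x (S.inv b))) (b + S.lam b x + -b) := by
          rw [e2]
          exact hN.cong_add_left _ h3
        have h5 : cong N (b + S.lam b x + -b) (S.lam b x) := by
          have h7 := hN.cong_add_left b (hcz (-b))
          simpa [add_assoc] using h7
        exact hN.cong_trans h4 h5
      have h8 : cong N (S.mul (S.mul b (S.mul x (S.inv b))) c) (S.mul (S.lam b x) c) :=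
        hN.lac hwz c
      have h9 : cong N (S.lam (S.mul b (S.mul x (S.inv b))) c) (S.lam (S.lam b x) c) := by
        simp only [SkewBrace.lam]
        exact hN.cong_add (hN.cong_neg hwz) h8
      exact hN.cong_trans (hN.cong_symm h9) hlw
    exact mem.2 ⟨hlz, hcz⟩
  have lamid : ∀ {u : A}, u ∈ M → ∀ c, S.lam u c - c ∈ M :=
    fun hu c => hmono ((mem.1 hu).1 c)
  have commM : ∀ {u : A}, u ∈ M → ∀ c, (u + c) - (c + u) ∈ M :=
    fun hu c => hmono ((mem.1 hu).2 c)
  have lacM : ∀ {u v : A}, u - v ∈ M → ∀ c, S.mul u c - S.mul v c ∈ M := by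
    intro u v hs c
    obtain ⟨hls, _⟩ := mem.1 hs
    obtain ⟨hls', _⟩ := mem.1 (invmem hs)
    have h1 : cong N (S.lam (S.inv (u - v)) v) v := hls' v
    have e1 : u = S.mul (u - v) (S.lam (S.inv (u - v)) v) := by
      rw [← S.add_eq_mul, sub_add_cancel]
    have h2 : cong N (S.mul (S.lam (S.inv (u - v)) v) c) (S.mul v c) := hN.lac h1 c
    have h3 : cong N (S.mul (u - v) (S.mul (S.lam (S.inv (u - v)) v) c))
        ((u - v) + S.mul (S.lam (S.inv (u - v)) v) c) := by
      rw [S.mul_eq (u - v)]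
      exact hN.cong_add_left _ (hls _)
    have h4 := hN.cong_add_left (u - v) h2
    have h5 : cong N (S.mul u c) ((u - v) + S.mul v c) := by
      rw [show S.mul u c = S.mul (u - v) (S.mul (S.lam (S.inv (u - v)) v) c) by
        rw [← S.mul_assoc, ← e1]]
      exact hN.cong_trans h3 h4
    have hn : S.mul u c - ((u - v) + S.mul v c) ∈ N := h5
    have e2 : S.mul u c - S.mul v c = (S.mul u c - ((u - v) + S.mul v c)) + (u - v) := by
      simp [sub_eq_add_neg, neg_add_rev, add_assoc]
    rw [e2]
    exact addmem (hmono hn) hs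
  exact ⟨zmem, addmem, negmem, conjmem, lammem, invmem, mulmem, lamid, commM, lacM⟩

theorem nice_zero : Nice S (socSet S 0) := by
  have hinv0 : S.inv (0:A) = 0 := (S.mul_zero (S.inv 0)).symm.trans (S.inv_mul 0)
  have hm : ∀ {u : A}, u ∈ socSet S 0 → u = 0 := fun h => h
  have h0 : ∀ {u : A}, u = 0 → u ∈ socSet S 0 := fun h => h
  refine ⟨rfl, ?_, ?_, ?_, ?_, ?_, ?_, ?_, ?_, ?_⟩
  · intro u v hu hv; exact h0 (by rw [hm hu, hm hv, add_zero])
  · intro u hu; exact h0 (by rw [hm hu, neg_zero])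
  · intro a u hu; exact h0 (by rw [hm hu, add_zero, add_neg_cancel])
  · intro a u hu; exact h0 (by rw [hm hu, S.lam_zero])
  · intro u hu; exact h0 (by rw [hm hu, hinv0])
  · intro u v hu hv; exact h0 (by rw [hm hu, hm hv, S.mul_zero])
  · intro u hu c; exact h0 (by rw [hm hu, S.lam_zero_elem, sub_self])
  · intro u hu c; exact h0 (by rw [hm hu, zero_add, add_zero, sub_self])
  · intro u v h c; exact h0 (by rw [show u = v from sub_eq_zero.1 (hm h), sub_self])

theorem nice : ∀ k, Nice S (socSet S k) := by
  intro k
  induction k with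
  | zero => exact nice_zero S
  | succ k ih => exact nice_succ S ih

end SkewBrace

namespace SkewBrace

variable {A : Type*} [AddGroup A] (S : SkewBrace A)

theorem cong_addRight_mem {N : Set A} (hN : Nice S N) {n : A} (v : A) (hn : n ∈ N) :
    cong N (v + n) v := by
  show (v + n) - v ∈ N
  rw [sub_eq_add_neg]
  exact hN.conj_mem v hn

theorem main_step (X : Set A)
    (hgen : ∀ I : AddSubgroup A, IsStrongLeftIdeal S I → X ⊆ (I : Set A) → I = ⊤)
    (T : Set A) (hT0 : (0 : A) ∈ T)
    (hTadd : ∀ a ∈ T, ∀ b ∈ T, a + b ∈ T) (hTneg : ∀ a ∈ T, -a ∈ T)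
    (hTmul : ∀ a ∈ T, ∀ b ∈ T, S.mul a b ∈ T) (hTinv : ∀ a ∈ T, S.inv a ∈ T)
    (hXT : X ⊆ T) (k : ℕ)
    (hP : ∀ a : A, ∃ t ∈ T, ∃ s ∈ socSet S (k+1), a = t + s) :
    ∀ a : A, ∃ t ∈ T, ∃ s ∈ socSet S k, a = t + s := by
  have hNk := nice S k
  have hNk1 := nice S (k+1)
  set C : Set A := {a : A | ∃ t ∈ T, ∃ s ∈ socSet S k, a = t + s} with hC
  have memI : ∀ (g t'' : A), t'' ∈ T → cong (socSet S k) g t'' → g ∈ C := by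
    intro g t'' ht hcong
    refine ⟨t'', ht, -t'' + g, ?_, (add_neg_cancel_left t'' g).symm⟩
    have h1 := hNk.conj_mem (-t'') hcong
    simpa [sub_eq_add_neg, add_assoc] using h1
  have hIzero : (0 : A) ∈ C := ⟨0, hT0, 0, hNk.zero_mem, by simp⟩
  have hIadd : ∀ {a b : A}, a ∈ C → b ∈ C → a + b ∈ C := by
    rintro a b ⟨t1, ht1, s1, hs1, rfl⟩ ⟨t2, ht2, s2, hs2, rfl⟩
    refine ⟨t1 + t2, hTadd _ ht1 _ ht2, (-t2 + s1 + t2) + s2,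
      hNk.add_mem (by simpa using hNk.conj_mem (-t2) hs1) hs2, ?_⟩
    simp [add_assoc, neg_add_cancel_left, add_neg_cancel_left]
  have hIneg : ∀ {a : A}, a ∈ C → -a ∈ C := by
    rintro a ⟨t, ht, s, hs, rfl⟩
    refine ⟨-t, hTneg _ ht, t + -s + -t, by simpa using hNk.conj_mem t (hNk.neg_mem hs), ?_⟩
    simp [add_assoc, neg_add_rev, neg_add_cancel_left]
  have hInormal : ∀ (a : A) {x : A}, x ∈ C → a + x + -a ∈ C := by
    rintro a x ⟨t, ht, s, hs, rfl⟩
    obtain ⟨t', ht', s', hs', rfl⟩ := hP a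
    have c1 : cong (socSet S k) (t + s) t := cong_addRight_mem S hNk t hs
    have c2 : cong (socSet S k) ((t' + s') + (t + s) + -(t' + s')) ((t' + s') + t + -(t' + s')) :=
      hNk.cong_add_right _ (hNk.cong_add_left _ c1)
    have c3 : cong (socSet S k) (s' + t) (t + s') := (hs' t).2
    have c4 : cong (socSet S k) ((t' + s') + t + -(t' + s')) (t' + (t + s') + -(t' + s')) := by
      rw [add_assoc t' s' t]
      exact hNk.cong_add_right _ (hNk.cong_add_left _ c3)
    have e5 : t' + (t + s') + -(t' + s') = t' + t + -t' := by
      simp [neg_add_rev, add_assoc]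
    have c6 : cong (socSet S k) ((t' + s') + (t + s) + -(t' + s')) (t' + t + -t') := by
      rw [← e5]
      exact hNk.cong_trans c2 c4
    exact memI _ _ (hTadd _ (hTadd _ ht' _ ht) _ (hTneg _ ht')) c6
  have hIlam : ∀ (a : A) {x : A}, x ∈ C → S.lam a x ∈ C := by
    rintro a x ⟨t, ht, s, hs, rfl⟩
    obtain ⟨t', ht', s', hs', rfl⟩ := hP a
    have d1 : cong (socSet S k) (S.lam (t' + s') (t + s)) (S.lam (t' + s') t) := by
      rw [S.lam_add]
      exact cong_addRight_mem S hNk _ (hNk.lam_mem _ hs)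
    have hc : S.lam (S.inv t') s' ∈ socSet S (k+1) := hNk1.lam_mem _ hs'
    have e : t' + s' = S.mul t' (S.lam (S.inv t') s') := S.add_eq_mul t' s'
    have d3 : S.lam (t' + s') t = S.lam t' (S.lam (S.lam (S.inv t') s') t) := by
      rw [e, S.lam_mul]
    have d4 : cong (socSet S k) (S.lam (S.lam (S.inv t') s') t) t :=
      ((mem_succ_iff S hNk).1 hc).1 t
    have d5 : cong (socSet S k) (S.lam (t' + s') t) (S.lam t' t) := by
      rw [d3]
      exact hNk.cong_lam t' d4
    have d6 : cong (socSet S k) (S.lam (t' + s') (t + s)) (S.lam t' t) :=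
      hNk.cong_trans d1 d5
    have hTlam : S.lam t' t ∈ T := hTadd _ (hTneg _ ht') _ (hTmul _ ht' _ ht)
    exact memI _ _ hTlam d6
  set I : AddSubgroup A :=
    { carrier := C
      zero_mem' := hIzero
      add_mem' := fun ha hb => hIadd ha hb
      neg_mem' := fun ha => hIneg ha } with hI
  have hIsli : IsStrongLeftIdeal S I := by
    constructor
    · exact ⟨fun n hn g => hInormal g hn⟩
    · intro a x hx
      exact hIlam a hx
  have hXI : X ⊆ (I : Set A) := fun x hx => ⟨x, hXT hx, 0, hNk.zero_mem, by simp⟩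
  have := hgen I hIsli hXI
  intro a
  have : a ∈ I := by rw [this]; trivial
  exact this

end SkewBrace


/-- A subset of a multipermutation skew brace generating it as a strong left
ideal generates it as a skew brace. -/
theorem stmt_7 {A : Type*} [AddGroup A] (S : SkewBrace A)
    (hmp : ∃ n, socSet S n = Set.univ) (X : Set A)
    (hgen : ∀ I : AddSubgroup A, IsStrongLeftIdeal S I → X ⊆ (I : Set A) → I = ⊤) :
    ∀ T : Set A, (0 : A) ∈ T →
      (∀ a ∈ T, ∀ b ∈ T, a + b ∈ T) → (∀ a ∈ T, -a ∈ T) →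
      (∀ a ∈ T, ∀ b ∈ T, S.mul a b ∈ T) → (∀ a ∈ T, S.inv a ∈ T) →
      X ⊆ T → T = Set.univ := by
  intro T hT0 hTadd hTneg hTmul hTinv hXT
  obtain ⟨n, hn⟩ := hmp
  have hstep : ∀ k : ℕ, (∀ a : A, ∃ t ∈ T, ∃ s ∈ socSet S (k+1), a = t + s) →
      (∀ a : A, ∃ t ∈ T, ∃ s ∈ socSet S k, a = t + s) :=
    fun k => SkewBrace.main_step S X hgen T hT0 hTadd hTneg hTmul hTinv hXT k
  have hdown : ∀ j : ℕ, (∀ a : A, ∃ t ∈ T, ∃ s ∈ socSet S j, a = t + s) →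
      (∀ a : A, ∃ t ∈ T, ∃ s ∈ socSet S 0, a = t + s) := by
    intro j
    induction j with
    | zero => exact id
    | succ k ih => exact fun h => ih (hstep k h)
  have hPn : ∀ a : A, ∃ t ∈ T, ∃ s ∈ socSet S n, a = t + s := by
    intro a
    exact ⟨0, hT0, a, by rw [hn]; trivial, (zero_add a).symm⟩
  have hP0 := hdown n hPn
  apply Set.eq_univ_of_forall
  intro a
  obtain ⟨t, ht, s, hs, rfl⟩ := hP0 a
  have hs0 : s = 0 := hs
  subst hs0
  simpa using ht
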